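/- A multivalued function f : X ⊸ Y between digital images is connectivity preserving if and only if (1) for every x ∈ X, f(x) is a connected subset of Y, and (2) for any adjacent points x, x' ∈ X, the sets f(x) and f(x') are adjacent. -/

import Mathlib

/-- A subset `A` is connected under adjacency `adj`: any two of its points are
joined by a path of consecutively adjacent points lying in `A`. -/
def ConnIn {X : Type*} (adj : X → X → Prop) (A : Set X) : Prop :=
  ∀ a ∈ A, ∀ b ∈ A,
    Relation.ReflTransGen (fun u v => adj u v ∧ u ∈ A ∧ v ∈ A) a b

/-- Two subsets are adjacent if they contain points that are equal or adjacent. -/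
def AdjSets {X : Type*} (adj : X → X → Prop) (A B : Set X) : Prop :=
  ∃ a ∈ A, ∃ b ∈ B, a = b ∨ adj a b

/-- Image of a set under a multivalued function. -/
def imageMV {X Y : Type*} (F : X → Set Y) (A : Set X) : Set Y :=
  ⋃ x ∈ A, F x

/-- A multivalued function is connectivity preserving if images of connected
sets are connected. -/
def ConnPres {X Y : Type*} (adjX : X → X → Prop) (adjY : Y → Y → Prop)
    (F : X → Set Y) : Prop :=
  ∀ A : Set X, ConnIn adjX A → ConnIn adjY (imageMV F A)

lemma mem_imageMV {X Y : Type*} {F : X → Set Y} {A : Set X} {y : Y} :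
    y ∈ imageMV F A ↔ ∃ x ∈ A, y ∈ F x := by
  simp [imageMV]

lemma connIn_mono {X : Type*} {adj : X → X → Prop} {A B : Set X}
    (hAB : A ⊆ B) {a b : X}
    (h : Relation.ReflTransGen (fun u v => adj u v ∧ u ∈ A ∧ v ∈ A) a b) :
    Relation.ReflTransGen (fun u v => adj u v ∧ u ∈ B ∧ v ∈ B) a b :=
  Relation.ReflTransGen.mono (r := fun u v => adj u v ∧ u ∈ A ∧ v ∈ A)
    (p := fun u v => adj u v ∧ u ∈ B ∧ v ∈ B)
    (fun _ _ ⟨h1, h2, h3⟩ => ⟨h1, hAB h2, hAB h3⟩) a b h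

theorem connectivity_preserving_iff {X Y : Type*}
    (adjX : X → X → Prop) (adjY : Y → Y → Prop)
    (hsymX : ∀ a b, adjX a b → adjX b a) (hirrX : ∀ a, ¬ adjX a a)
    (hsymY : ∀ a b, adjY a b → adjY b a) (hirrY : ∀ a, ¬ adjY a a)
    (F : X → Set Y) (hne : ∀ x, (F x).Nonempty) :
    ConnPres adjX adjY F ↔
      ((∀ x, ConnIn adjY (F x)) ∧
       (∀ x x', adjX x x' → AdjSets adjY (F x) (F x'))) := by
  constructor
  · intro h
    constructor
    · intro x
      have hsing : ConnIn adjX {x} := by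
        intro a ha b hb
        rw [Set.mem_singleton_iff] at ha hb
        subst ha; subst hb
        exact Relation.ReflTransGen.refl
      have himg : imageMV F {x} = F x := by
        simp [imageMV]
      have := h {x} hsing
      rw [himg] at this
      exact this
    · intro x x' hadj
      have hconn : ConnIn adjX {x, x'} := by
        intro a ha b hb
        have step : ∀ u v, u ∈ ({x, x'} : Set X) → v ∈ ({x, x'} : Set X) →
            Relation.ReflTransGen
              (fun u v => adjX u v ∧ u ∈ ({x, x'} : Set X) ∧ v ∈ ({x, x'} : Set X)) u v := by
          intro u v hu hv
          rcases hu with hu | hu <;> rcases hv with hv | hv <;> subst hu <;> subst hv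
          · exact Relation.ReflTransGen.refl
          · exact Relation.ReflTransGen.single ⟨hadj, Or.inl rfl, Or.inr rfl⟩
          · exact Relation.ReflTransGen.single ⟨hsymX _ _ hadj, Or.inr rfl, Or.inl rfl⟩
          · exact Relation.ReflTransGen.refl
        exact step a b ha hb
      have h2 := h {x, x'} hconn
      obtain ⟨a, ha⟩ := hne x
      obtain ⟨b, hb⟩ := hne x'
      have haI : a ∈ imageMV F {x, x'} := mem_imageMV.mpr ⟨x, Or.inl rfl, ha⟩
      have hbI : b ∈ imageMV F {x, x'} := mem_imageMV.mpr ⟨x', Or.inr rfl, hb⟩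
      have hpath := h2 a haI b hbI
      -- induct along the path: either stay in F x, or find an adjacent pair
      have key : ∀ c, Relation.ReflTransGen
          (fun u v => adjY u v ∧ u ∈ imageMV F {x, x'} ∧ v ∈ imageMV F {x, x'}) a c →
          (c ∈ F x ∨ AdjSets adjY (F x) (F x')) := by
        intro c hc
        induction hc with
        | refl => exact Or.inl ha
        | tail _ hstep ih =>
          rcases ih with hc | hadjs
          · obtain ⟨hyy, _, hvmem⟩ := hstep
            rcases mem_imageMV.mp hvmem with ⟨z, hz, hvz⟩
            rcases hz with hz | hz
            · subst hz; exact Or.inl hvz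
            · subst hz; exact Or.inr ⟨_, hc, _, hvz, Or.inr hyy⟩
          · exact Or.inr hadjs
      rcases key b hpath with hbx | hadjs
      · exact ⟨b, hbx, b, hb, Or.inl rfl⟩
      · exact hadjs
  · rintro ⟨h1, h2⟩ A hA y hy z hz
    rcases mem_imageMV.mp hy with ⟨x, hxA, hyx⟩
    rcases mem_imageMV.mp hz with ⟨x', hx'A, hzx'⟩
    have hFsub : ∀ {w : X}, w ∈ A → F w ⊆ imageMV F A := by
      intro w hw t ht; exact mem_imageMV.mpr ⟨w, hw, ht⟩
    have hxpath := hA x hxA x' hx'A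
    -- induct along the path in A
    have key : ∀ c, Relation.ReflTransGen
        (fun u v => adjX u v ∧ u ∈ A ∧ v ∈ A) x c →
        c ∈ A → ∀ z ∈ F c, Relation.ReflTransGen
          (fun u v => adjY u v ∧ u ∈ imageMV F A ∧ v ∈ imageMV F A) y z := by
      intro c hc
      induction hc with
      | refl =>
        intro _ z hz
        exact connIn_mono (hFsub hxA) (h1 x y hyx z hz)
      | @tail m c _ hstep ih =>
        intro hcA z hz
        obtain ⟨hmc, hmA, hcA'⟩ := hstep
        obtain ⟨p, hp, q, hq, hpq⟩ := h2 m c hmc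
        have hyp := ih hmA p hp
        have hqz : Relation.ReflTransGen
            (fun u v => adjY u v ∧ u ∈ imageMV F A ∧ v ∈ imageMV F A) q z :=
          connIn_mono (hFsub hcA') (h1 c q hq z hz)
        rcases hpq with rfl | hpq
        · exact hyp.trans hqz
        · exact (hyp.tail ⟨hpq, hFsub hmA hp, hFsub hcA' hq⟩).trans hqz
    exact key x' hxpath hx'A z hzx'
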